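/- Let L > 0 and let γ : ℝ → ℝ² be an L-periodic unit-speed C² parametrisation of a simple closed curve: γ is twice continuously differentiable, γ(s+L) = γ(s) for all s, ‖γ'(s)‖ = 1 for all s, γ is injective on [0,L), and κ_max := sup_s ‖γ''(s)‖ is finite. Then there exists a constant c ∈ (0,1] such that for all s, t ∈ [0,L]: c · d_Γ(s,t) ≤ ‖γ(s) − γ(t)‖ ≤ d_Γ(s,t), where d_Γ(s,t) := min(|s−t|, L−|s−t|). -/

import Mathlib

open Set RealInnerProductSpace

theorem chord_arc_equivalence
    (L : ℝ) (hL : 0 < L)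
    (γ : ℝ → EuclideanSpace ℝ (Fin 2))
    (hsmooth : ContDiff ℝ 2 γ)
    (hper : ∀ s : ℝ, γ (s + L) = γ s)
    (hunit : ∀ s : ℝ, ‖deriv γ s‖ = 1)
    (hinj : Set.InjOn γ (Set.Ico 0 L))
    (hκ : BddAbove (Set.range fun s => ‖deriv (deriv γ) s‖)) :
    ∃ c : ℝ, c ∈ Set.Ioc (0 : ℝ) 1 ∧
      ∀ s ∈ Set.Icc (0 : ℝ) L, ∀ t ∈ Set.Icc (0 : ℝ) L,
        c * min |s - t| (L - |s - t|) ≤ ‖γ s - γ t‖ ∧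
        ‖γ s - γ t‖ ≤ min |s - t| (L - |s - t|) := by
  classical
  have h2 : ContDiff ℝ (1 + 1 : WithTop ℕ∞) γ := by
    have h : ((2:ℕ) : WithTop ℕ∞) = 1 + 1 := by norm_num
    exact h ▸ hsmooth
  have hdiff : Differentiable ℝ γ := hsmooth.differentiable (by norm_num)
  have hd1 : ContDiff ℝ 1 (deriv γ) := (contDiff_succ_iff_deriv.mp h2).2.2
  have hdiff' : Differentiable ℝ (deriv γ) := hd1.differentiable (by norm_num)
  set κ : ℝ := max (sSup (Set.range fun s => ‖deriv (deriv γ) s‖)) 1 with hκdef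
  have hκ1 : (1:ℝ) ≤ κ := le_max_right _ _
  have hκ0 : (0:ℝ) < κ := lt_of_lt_of_le one_pos hκ1
  have hκb : ∀ s, ‖deriv (deriv γ) s‖ ≤ κ := fun s =>
    le_trans (le_csSup hκ ⟨s, rfl⟩) (le_max_left _ _)
  -- γ is 1-Lipschitz
  have hlip : LipschitzWith 1 γ := by
    refine lipschitzWith_of_nnnorm_deriv_le hdiff fun x => ?_
    rw [← NNReal.coe_le_coe, coe_nnnorm, hunit x, NNReal.coe_one]
  have hlipn : ∀ a b : ℝ, ‖γ a - γ b‖ ≤ |a - b| := by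
    intro a b
    have := hlip.dist_le_mul a b
    simpa [dist_eq_norm, Real.dist_eq] using this
  -- deriv γ is κ-Lipschitz
  have hlipd : LipschitzWith κ.toNNReal (deriv γ) := by
    refine lipschitzWith_of_nnnorm_deriv_le hdiff' fun x => ?_
    rw [← NNReal.coe_le_coe, coe_nnnorm, Real.coe_toNNReal _ hκ0.le]
    exact hκb x
  have hlipdn : ∀ a b : ℝ, ‖deriv γ a - deriv γ b‖ ≤ κ * |a - b| := by
    intro a b
    have := hlipd.dist_le_mul a b
    simpa [dist_eq_norm, Real.dist_eq, Real.coe_toNNReal _ hκ0.le] using this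
  -- near-diagonal lower bound
  have near : ∀ s t : ℝ, t ≤ s → s - t ≤ 1/κ → (s - t)/2 ≤ ‖γ s - γ t‖ := by
    intro s t hts hd
    set v := deriv γ t with hv_def
    have hv : ‖v‖ = 1 := hunit t
    have key : ∀ u ∈ Icc t s, (1:ℝ)/2 ≤ ⟪deriv γ u, v⟫ := by
      intro u hu
      have h1 : ‖deriv γ u - v‖ ≤ κ * (u - t) := by
        simpa [abs_of_nonneg (sub_nonneg.2 hu.1)] using hlipdn u t
      have h2 : ‖deriv γ u - v‖ ≤ 1 := by
        refine h1.trans ?_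
        have h3 : u - t ≤ 1/κ := by
          have := hu.2; linarith
        calc κ * (u - t) ≤ κ * (1/κ) := mul_le_mul_of_nonneg_left h3 hκ0.le
          _ = 1 := by field_simp
      have h3 : ‖deriv γ u - v‖^2 ≤ 1 := by nlinarith [norm_nonneg (deriv γ u - v)]
      have h4 : ‖deriv γ u - v‖^2 = 2 - 2*⟪deriv γ u, v⟫ := by
        rw [norm_sub_sq_real, hunit u, hv]; ring
      linarith
    set g : ℝ → ℝ := fun u => ⟪γ u, v⟫ - u/2 with hg
    have hgd : ∀ u : ℝ, HasDerivAt g (⟪deriv γ u, v⟫ - 1/2) u := by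
      intro u
      have h1 : HasDerivAt (fun w => ⟪γ w, v⟫)
          (⟪γ u, (0:EuclideanSpace ℝ (Fin 2))⟫ + ⟪deriv γ u, v⟫) u :=
        (hdiff u).hasDerivAt.inner ℝ (hasDerivAt_const u v)
      have h2 : HasDerivAt (fun w : ℝ => w/2) (1/2) u := by
        simpa using (hasDerivAt_id u).div_const 2
      have := h1.sub h2
      simp only [inner_zero_right, zero_add] at this; exact this
    have hmono : MonotoneOn g (Icc t s) := by
      refine monotoneOn_of_deriv_nonneg (convex_Icc t s)
        (fun u _ => (hgd u).continuousAt.continuousWithinAt)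
        (fun u hu => (hgd u).differentiableAt.differentiableWithinAt)
        (fun u hu => ?_)
      rw [(hgd u).deriv]
      have := key u (interior_subset hu)
      linarith
    have hgl : g t ≤ g s := hmono (left_mem_Icc.2 hts) (right_mem_Icc.2 hts) hts
    have hinn : (s - t)/2 ≤ ⟪γ s - γ t, v⟫ := by
      rw [inner_sub_left]
      simp only [hg] at hgl
      linarith
    calc (s - t)/2 ≤ ⟪γ s - γ t, v⟫ := hinn
      _ ≤ ‖γ s - γ t‖ * ‖v‖ := real_inner_le_norm _ _
      _ = ‖γ s - γ t‖ := by rw [hv, mul_one]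
  -- upper bound helper via periodicity
  have upper2 : ∀ s t : ℝ, t ≤ s → s - t ≤ L → ‖γ s - γ t‖ ≤ L - (s - t) := by
    intro s t hts hsl
    calc ‖γ s - γ t‖ = ‖γ s - γ (t + L)‖ := by rw [hper t]
      _ ≤ |s - (t + L)| := hlipn _ _
      _ = L - (s - t) := by rw [abs_of_nonpos (by linarith)]; ring
  set δ : ℝ := min (L/2) (1/κ) with hδdef
  have hδ0 : 0 < δ := lt_min (by linarith) (by positivity)
  have hδκ : δ ≤ 1/κ := min_le_right _ _
  -- injectivity: points at positive arc-distance have distinct images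
  have hne : ∀ s ∈ Icc (0:ℝ) L, ∀ t ∈ Icc (0:ℝ) L,
      δ ≤ min |s - t| (L - |s - t|) → γ s ≠ γ t := by
    intro s hs t ht hmin heq
    have hγL : γ L = γ 0 := by simpa using hper 0
    have key : min |s - t| (L - |s - t|) = 0 := by
      set s' : ℝ := if s = L then 0 else s with hs'
      set t' : ℝ := if t = L then 0 else t with ht'
      have hs'mem : s' ∈ Ico (0:ℝ) L := by
        by_cases h : s = L <;> simp [hs', h]
        · exact hL
        · exact ⟨hs.1, lt_of_le_of_ne hs.2 h⟩
      have ht'mem : t' ∈ Ico (0:ℝ) L := by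
        by_cases h : t = L <;> simp [ht', h]
        · exact hL
        · exact ⟨ht.1, lt_of_le_of_ne ht.2 h⟩
      have hγs : γ s' = γ s := by
        by_cases h : s = L
        · rw [hs', if_pos h, h]; exact hγL.symm
        · rw [hs', if_neg h]
      have hγt : γ t' = γ t := by
        by_cases h : t = L
        · rw [ht', if_pos h, h]; exact hγL.symm
        · rw [ht', if_neg h]
      have hst : s' = t' := hinj hs'mem ht'mem (by rw [hγs, hγt, heq])
      by_cases h1 : s = L <;> by_cases h2 : t = L
      · rw [h1, h2]; simp [hL.le]
      · rw [hs', if_pos h1, ht', if_neg h2] at hst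
        rw [h1, ← hst, sub_zero, abs_of_nonneg hL.le, sub_self]
        exact min_eq_right hL.le
      · rw [hs', if_neg h1, ht', if_pos h2] at hst
        rw [h2, hst, zero_sub, abs_neg, abs_of_nonneg hL.le, sub_self]
        exact min_eq_right hL.le
      · rw [hs', if_neg h1, ht', if_neg h2] at hst
        rw [hst]; simp [hL.le]
    rw [key] at hmin
    linarith
  -- compact minimum away from the diagonal
  set Kset : Set (ℝ × ℝ) :=
    (Icc (0:ℝ) L ×ˢ Icc (0:ℝ) L) ∩ {p : ℝ × ℝ | δ ≤ min |p.1 - p.2| (L - |p.1 - p.2|)}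
    with hKsetdef
  have hcont2 : Continuous fun p : ℝ × ℝ => min |p.1 - p.2| (L - |p.1 - p.2|) :=
    ((continuous_fst.sub continuous_snd).abs).min
      (continuous_const.sub (continuous_fst.sub continuous_snd).abs)
  have hKc : IsCompact Kset :=
    (isCompact_Icc.prod isCompact_Icc).inter_right (isClosed_le continuous_const hcont2)
  have hFc : Continuous fun p : ℝ × ℝ => ‖γ p.1 - γ p.2‖ :=
    ((hdiff.continuous.comp continuous_fst).sub (hdiff.continuous.comp continuous_snd)).norm
  have hm : ∃ m : ℝ, 0 < m ∧ ∀ p ∈ Kset, m ≤ ‖γ p.1 - γ p.2‖ := by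
    rcases Set.eq_empty_or_nonempty Kset with hK | hK
    · exact ⟨1, one_pos, by simp [hK]⟩
    · obtain ⟨p, hpK, hpmin⟩ := hKc.exists_isMinOn hK hFc.continuousOn
      refine ⟨‖γ p.1 - γ p.2‖, ?_, fun q hq => hpmin hq⟩
      have hne' := hne p.1 hpK.1.1 p.2 hpK.1.2 hpK.2
      rw [norm_sub_pos_iff]
      exact fun h => hne' h
  obtain ⟨m, hm0, hmK⟩ := hm
  refine ⟨min (1/2) (2*m/L), ⟨lt_min (by norm_num) (by positivity),
    le_trans (min_le_left _ _) (by norm_num)⟩, ?_⟩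
  intro s hs t ht
  set c := min (1/2 : ℝ) (2*m/L) with hcdef
  have hc0 : 0 < c := lt_min (by norm_num) (by positivity)
  have hcl : c ≤ 1/2 := min_le_left _ _
  have hcm : c ≤ 2*m/L := min_le_right _ _
  have habsL : |s - t| ≤ L := by
    rw [abs_sub_le_iff]
    constructor <;> [linarith [hs.2, ht.1]; linarith [ht.2, hs.1]]
  set d := min |s - t| (L - |s - t|) with hddef
  have hd0 : 0 ≤ d := le_min (abs_nonneg _) (by linarith)
  have hdL2 : d ≤ L/2 := by
    rcases le_total |s - t| (L/2) with h | h
    · exact (min_le_left _ _).trans h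
    · exact (min_le_right _ _).trans (by linarith)
  constructor
  · -- lower bound
    by_cases hcase : d ≤ δ
    · rcases min_le_iff.mp hcase with h | h
      · -- |s - t| small
        have h1 : |s - t| / 2 ≤ ‖γ s - γ t‖ := by
          rcases le_total t s with hts | hts
          · have habs : |s - t| = s - t := abs_of_nonneg (by linarith)
            have := near s t hts (by rw [habs] at h; linarith)
            rw [habs]; exact this
          · have habs : |s - t| = t - s := by
              rw [abs_of_nonpos (by linarith)]; ring
            have := near t s hts (by rw [habs] at h; linarith)
            rw [habs, norm_sub_rev]; exact this
        calc c * d ≤ (1/2) * |s - t| := mul_le_mul hcl (min_le_left _ _) hd0 (by norm_num)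
          _ = |s - t| / 2 := by ring
          _ ≤ ‖γ s - γ t‖ := h1
      · -- L - |s - t| small : use periodicity
        have h1 : (L - |s - t|) / 2 ≤ ‖γ s - γ t‖ := by
          rcases le_total t s with hts | hts
          · have habs : |s - t| = s - t := abs_of_nonneg (by linarith)
            have hle : s ≤ t + L := by linarith [hs.2, ht.1]
            have hnear := near (t + L) s hle (by rw [habs] at h; linarith)
            rw [hper t] at hnear
            rw [habs]
            calc (L - (s - t)) / 2 = (t + L - s) / 2 := by ring
              _ ≤ ‖γ t - γ s‖ := hnear
              _ = ‖γ s - γ t‖ := norm_sub_rev _ _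
          · have habs : |s - t| = t - s := by
              rw [abs_of_nonpos (by linarith)]; ring
            have hle : t ≤ s + L := by linarith [ht.2, hs.1]
            have hnear := near (s + L) t hle (by rw [habs] at h; linarith)
            rw [hper s] at hnear
            rw [habs]
            calc (L - (t - s)) / 2 = (s + L - t) / 2 := by ring
              _ ≤ ‖γ s - γ t‖ := hnear
        calc c * d ≤ (1/2) * (L - |s - t|) := mul_le_mul hcl (min_le_right _ _) hd0 (by norm_num)
          _ = (L - |s - t|) / 2 := by ring
          _ ≤ ‖γ s - γ t‖ := h1
    · -- far from the diagonal : compactness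
      push_neg at hcase
      have hKmem : (s, t) ∈ Kset := ⟨⟨hs, ht⟩, hcase.le⟩
      have hmst := hmK (s, t) hKmem
      calc c * d ≤ (2*m/L) * (L/2) := mul_le_mul hcm hdL2 hd0 (by positivity)
        _ = m := by field_simp
        _ ≤ ‖γ s - γ t‖ := hmst
  · -- upper bound
    refine le_min (hlipn s t) ?_
    rcases le_total t s with hts | hts
    · rw [abs_of_nonneg (by linarith)]
      exact upper2 s t hts (by linarith [hs.2, ht.1])
    · have habs : |s - t| = t - s := by rw [abs_of_nonpos (by linarith)]; ring
      rw [habs, norm_sub_rev]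
      exact upper2 t s hts (by linarith [ht.2, hs.1])
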